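/- Let H_k, H_o, H_d be complex matrices (of sizes k×k, (n-k)×k, (n-k)×(n-k)) with ‖H_k^{-1}‖ ≤ M₁, ‖H_o‖ ≤ M₂, ‖H_d^{-1}‖ ≤ 1/(F - M₂), and F > M₂ + M₁M₂². Then the Schur complement A = (H_k - H_o^T H_d^{-1} H_o)^{-1} exists and satisfies ‖A‖ ≤ (F - M₂)M₁ / (F - M₂ - M₁M₂²). -/

import Mathlib

open scoped Matrix Matrix.Norms.L2Operator

lemma l2_opNorm_map_conj_le {p q : ℕ} (A : Matrix (Fin p) (Fin q) ℂ) :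
    ‖A.map (starRingEnd ℂ)‖ ≤ ‖A‖ := by
  rw [Matrix.l2_opNorm_def]
  refine ContinuousLinearMap.opNorm_le_bound _ (norm_nonneg A) fun x => ?_
  set v : Fin q → ℂ := star ((WithLp.equiv 2 _) x) with hv
  have key : Matrix.toEuclideanLin (A.map (starRingEnd ℂ)) x
      = (WithLp.equiv 2 (Fin p → ℂ)).symm (star (A *ᵥ v)) := by
    rw [Matrix.toEuclideanLin_apply]
    congr 1
    funext i
    simp [Matrix.mulVec, dotProduct, Matrix.map_apply, hv, map_sum, mul_comm]
  have hxnorm : ‖((WithLp.equiv 2 (Fin q → ℂ)).symm v : EuclideanSpace ℂ (Fin q))‖ = ‖x‖ := by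
    simp [EuclideanSpace.norm_eq, hv]
  calc ‖(Matrix.toEuclideanLin.trans LinearMap.toContinuousLinearMap (A.map (starRingEnd ℂ))) x‖
      = ‖((WithLp.equiv 2 (Fin p → ℂ)).symm (star (A *ᵥ v)) : EuclideanSpace ℂ (Fin p))‖ := by
        exact congrArg _ key
    _ = ‖((WithLp.equiv 2 (Fin p → ℂ)).symm (A *ᵥ v) : EuclideanSpace ℂ (Fin p))‖ := by
        simp [EuclideanSpace.norm_eq]
    _ = ‖(EuclideanSpace.equiv (Fin p) ℂ).symm (A *ᵥ ((WithLp.equiv 2 (Fin q → ℂ)) ((WithLp.equiv 2 (Fin q → ℂ)).symm v)))‖ := by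
        simp
    _ ≤ ‖A‖ * ‖((WithLp.equiv 2 (Fin q → ℂ)).symm v : EuclideanSpace ℂ (Fin q))‖ :=
        Matrix.l2_opNorm_mulVec A _
    _ = ‖A‖ * ‖x‖ := by rw [hxnorm]

lemma l2_opNorm_transpose_le {p q : ℕ} (A : Matrix (Fin p) (Fin q) ℂ) : ‖Aᵀ‖ ≤ ‖A‖ := by
  have h : Aᵀ = (A.map (starRingEnd ℂ))ᴴ := by
    ext i j; simp [Matrix.conjTranspose_apply, Matrix.map_apply]
  rw [h, Matrix.l2_opNorm_conjTranspose]
  exact l2_opNorm_map_conj_le A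

lemma l2_opNorm_one_le (p : ℕ) : ‖(1 : Matrix (Fin p) (Fin p) ℂ)‖ ≤ 1 := by
  rw [Matrix.cstar_norm_def, map_one]
  exact ContinuousLinearMap.norm_id_le

/-- existence and norm bound for the Schur complement inverse. -/
theorem schur_complement_norm_bound {k m : ℕ}
    (Hk : Matrix (Fin k) (Fin k) ℂ) (Ho : Matrix (Fin m) (Fin k) ℂ)
    (Hd : Matrix (Fin m) (Fin m) ℂ) (M₁ M₂ F : ℝ)
    (hHk : IsUnit Hk) (hHd : IsUnit Hd)
    (h1 : ‖Hk⁻¹‖ ≤ M₁) (h2 : ‖Ho‖ ≤ M₂) (h3 : ‖Hd⁻¹‖ ≤ 1 / (F - M₂))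
    (hF : M₂ + M₁ * M₂ ^ 2 < F) :
    IsUnit (Hk - Hoᵀ * Hd⁻¹ * Ho) ∧
      ‖(Hk - Hoᵀ * Hd⁻¹ * Ho)⁻¹‖ ≤ (F - M₂) * M₁ / (F - M₂ - M₁ * M₂ ^ 2) := by
  have hM1 : (0:ℝ) ≤ M₁ := le_trans (norm_nonneg _) h1
  have hM2 : (0:ℝ) ≤ M₂ := le_trans (norm_nonneg _) h2
  have hFM2 : (0:ℝ) < F - M₂ := by nlinarith
  have hden : (0:ℝ) < F - M₂ - M₁ * M₂ ^ 2 := by nlinarith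
  set E : Matrix (Fin k) (Fin k) ℂ := Hoᵀ * Hd⁻¹ * Ho with hE
  set B : Matrix (Fin k) (Fin k) ℂ := Hk⁻¹ * E with hB
  have hT : ‖Hoᵀ‖ ≤ M₂ := le_trans (l2_opNorm_transpose_le Ho) h2
  have hEnorm : ‖E‖ ≤ M₂ * (1 / (F - M₂)) * M₂ := by
    calc ‖E‖ ≤ ‖Hoᵀ * Hd⁻¹‖ * ‖Ho‖ := Matrix.l2_opNorm_mul _ _
      _ ≤ ‖Hoᵀ‖ * ‖Hd⁻¹‖ * ‖Ho‖ := by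
          have := Matrix.l2_opNorm_mul Hoᵀ Hd⁻¹
          exact mul_le_mul_of_nonneg_right this (norm_nonneg _)
      _ ≤ M₂ * (1 / (F - M₂)) * M₂ := by
          have h3' : (0:ℝ) ≤ 1 / (F - M₂) := by positivity
          apply mul_le_mul _ h2 (norm_nonneg _) (by positivity)
          exact mul_le_mul hT h3 (norm_nonneg _) hM2
  have hBnorm : ‖B‖ ≤ M₁ * M₂ ^ 2 / (F - M₂) := by
    calc ‖B‖ ≤ ‖Hk⁻¹‖ * ‖E‖ := Matrix.l2_opNorm_mul _ _
      _ ≤ M₁ * (M₂ * (1 / (F - M₂)) * M₂) := by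
          apply mul_le_mul h1 hEnorm (norm_nonneg _) hM1
      _ = M₁ * M₂ ^ 2 / (F - M₂) := by ring
  have hBlt : ‖B‖ < 1 := by
    refine lt_of_le_of_lt hBnorm ?_
    rw [div_lt_one hFM2]; nlinarith
  have hdet : IsUnit Hk.det := (Matrix.isUnit_iff_isUnit_det Hk).mp hHk
  have hfac : Hk - E = Hk * (1 - B) := by
    rw [mul_sub, mul_one, hB, ← mul_assoc, Matrix.mul_nonsing_inv Hk hdet, one_mul]
  have hUnit1 : IsUnit (1 - B) := (Units.oneSub B hBlt).isUnit
  have hUnit : IsUnit (Hk - E) := by rw [hfac]; exact hHk.mul hUnit1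
  refine ⟨hUnit, ?_⟩
  have hinv : (Hk - E)⁻¹ = (1 - B)⁻¹ * Hk⁻¹ := by rw [hfac, Matrix.mul_inv_rev]
  have hgeom : ‖(1 - B)⁻¹‖ ≤ (1 - ‖B‖)⁻¹ := by
    rw [Matrix.nonsing_inv_eq_ringInverse, ← geom_series_eq_inverse B hBlt]
    have h := tsum_geometric_le_of_norm_lt_one B hBlt
    have hone := l2_opNorm_one_le k
    linarith
  have hstep : ‖(Hk - E)⁻¹‖ ≤ (1 - ‖B‖)⁻¹ * M₁ := by
    rw [hinv]
    calc ‖(1 - B)⁻¹ * Hk⁻¹‖ ≤ ‖(1 - B)⁻¹‖ * ‖Hk⁻¹‖ := Matrix.l2_opNorm_mul _ _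
      _ ≤ (1 - ‖B‖)⁻¹ * M₁ := by
          have h1B : (0:ℝ) < 1 - ‖B‖ := by linarith
          apply mul_le_mul hgeom h1 (norm_nonneg _)
          positivity
  refine le_trans hstep ?_
  have h1B : 0 < 1 - ‖B‖ := by linarith
  have hle : (1 - ‖B‖)⁻¹ ≤ (F - M₂) / (F - M₂ - M₁ * M₂ ^ 2) := by
    have hq : (0:ℝ) < (F - M₂ - M₁ * M₂ ^ 2) / (F - M₂) := by positivity
    have hab : (F - M₂ - M₁ * M₂ ^ 2) / (F - M₂) ≤ 1 - ‖B‖ := by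
      have h' : ‖B‖ * (F - M₂) ≤ M₁ * M₂ ^ 2 := (le_div_iff₀ hFM2).mp hBnorm
      refine (div_le_iff₀ hFM2).mpr ?_
      nlinarith [h']
    calc (1 - ‖B‖)⁻¹ ≤ ((F - M₂ - M₁ * M₂ ^ 2) / (F - M₂))⁻¹ :=
          inv_anti₀ hq hab
      _ = (F - M₂) / (F - M₂ - M₁ * M₂ ^ 2) := by
          rw [inv_div]
  calc (1 - ‖B‖)⁻¹ * M₁ ≤ (F - M₂) / (F - M₂ - M₁ * M₂ ^ 2) * M₁ :=
        mul_le_mul_of_nonneg_right hle hM1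
    _ = (F - M₂) * M₁ / (F - M₂ - M₁ * M₂ ^ 2) := by ring
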